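/- Let f be a homeomorphism of a compact metric space satisfying: for each ε > 0 there is δ > 0 such that d(x,y) < δ implies C^u_ε(x) ∩ C^s_ε(y) ≠ ∅ (cw-local-product-structure), and suppose f is cw-expansive. If p, q are both fixed points of f and z ∈ C^u_δ(p) ∩ C^s_δ(q) with suitable constants as in the finiteness-of-fixed-points argument, then f⁻ⁱ(z) ∈ C^u_γ(p) ∩ C^s_γ(q) for all i ≥ 0, where γ bounds the diameters of iterates. In particular, if f is cwN-hyperbolic, then f has only finitely many fixed points. -/

import Mathlib

open Metric Set

variable {X : Type*} [MetricSpace X]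

/-- Two-sided iteration of a homeomorphism. -/
def zIter (f : X ≃ₜ X) (n : ℤ) (x : X) : X :=
  if 0 ≤ n then (⇑f)^[n.toNat] x else (⇑f.symm)^[(-n).toNat] x

/-- A subcontinuum: a compact connected (nonempty) subset. -/
def IsContinuum (A : Set X) : Prop := IsCompact A ∧ IsConnected A

/-- Local stable set. -/
def Ws (f : X ≃ₜ X) (ε : ℝ) (x : X) : Set X :=
  {y | ∀ n : ℕ, dist ((⇑f)^[n] x) ((⇑f)^[n] y) ≤ ε}

/-- Local unstable set. -/
def Wu (f : X ≃ₜ X) (ε : ℝ) (x : X) : Set X :=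
  {y | ∀ n : ℕ, dist ((⇑f.symm)^[n] x) ((⇑f.symm)^[n] y) ≤ ε}

/-- Local stable continuum: connected component of the local stable set. -/
def Cs (f : X ≃ₜ X) (ε : ℝ) (x : X) : Set X := connectedComponentIn (Ws f ε x) x

/-- Local unstable continuum. -/
def Cu (f : X ≃ₜ X) (ε : ℝ) (x : X) : Set X := connectedComponentIn (Wu f ε x) x

/-- cw-expansivity with a given constant. -/
def CwExpansiveWith (f : X ≃ₜ X) (c : ℝ) : Prop :=
  0 < c ∧ ∀ C : Set X, IsContinuum C →
    (∀ n : ℤ, Metric.diam (zIter f n '' C) ≤ c) → C.Subsingleton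


/-- Continuum-wise expansivity. -/
def CwExpansive (f : X ≃ₜ X) : Prop := ∃ c, CwExpansiveWith f c

/-- cw-local-product-structure. -/
def CwLPS (f : X ≃ₜ X) : Prop :=
  ∀ ε > 0, ∃ δ > 0, ∀ x y : X, dist x y < δ → (Cu f ε x ∩ Cs f ε y).Nonempty

/-- Continuum-wise hyperbolicity. -/
def CwHyperbolic (f : X ≃ₜ X) : Prop := CwExpansive f ∧ CwLPS f

/-- cwN-expansivity. -/
def CwNExpansive (f : X ≃ₜ X) (N : ℕ) : Prop :=
  ∃ c > 0, ∀ x : X,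
    (Cs f c x ∩ Cu f c x).Finite ∧ (Cs f c x ∩ Cu f c x).ncard ≤ N

/-- cwN-hyperbolicity. -/
def CwNHyperbolic (f : X ≃ₜ X) (N : ℕ) : Prop := CwHyperbolic f ∧ CwNExpansive f N

namespace CwHelp

lemma symm_iter_iter (f : X ≃ₜ X) (n : ℕ) (x : X) :
    (⇑f.symm)^[n] ((⇑f)^[n] x) = x :=
  (Function.LeftInverse.iterate f.symm_apply_apply n) x

lemma iter_symm_iter (f : X ≃ₜ X) (n : ℕ) (x : X) :
    (⇑f)^[n] ((⇑f.symm)^[n] x) = x :=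
  (Function.LeftInverse.iterate f.apply_symm_apply n) x

lemma symm_fixed {f : X ≃ₜ X} {p : X} (hp : f p = p) : f.symm p = p := by
  have h := congrArg f.symm hp
  rw [f.symm_apply_apply] at h
  exact h.symm

lemma Ws_symm (f : X ≃ₜ X) (ε : ℝ) (x : X) : Ws f.symm ε x = Wu f ε x := rfl

lemma Wu_symm (f : X ≃ₜ X) (ε : ℝ) (x : X) : Wu f.symm ε x = Ws f ε x := rfl

lemma Cs_symm (f : X ≃ₜ X) (ε : ℝ) (x : X) : Cs f.symm ε x = Cu f ε x := rfl

lemma Cu_symm (f : X ≃ₜ X) (ε : ℝ) (x : X) : Cu f.symm ε x = Cs f ε x := rfl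

lemma mem_Ws_self (f : X ≃ₜ X) {ε : ℝ} (hε : 0 ≤ ε) (x : X) : x ∈ Ws f ε x :=
  fun n => by simp [hε]

lemma Ws_mono (f : X ≃ₜ X) {a b : ℝ} (h : a ≤ b) (x : X) : Ws f a x ⊆ Ws f b x :=
  fun y hy n => (hy n).trans h

lemma mem_Cs_self (f : X ≃ₜ X) {ε : ℝ} (hε : 0 ≤ ε) (x : X) : x ∈ Cs f ε x :=
  mem_connectedComponentIn (mem_Ws_self f hε x)

lemma Cs_subset (f : X ≃ₜ X) (ε : ℝ) (x : X) : Cs f ε x ⊆ Ws f ε x :=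
  connectedComponentIn_subset _ _

lemma Cs_mono (f : X ≃ₜ X) {a b : ℝ} (h : a ≤ b) (x : X) : Cs f a x ⊆ Cs f b x :=
  connectedComponentIn_mono _ (Ws_mono f h x)

lemma Cu_mono (f : X ≃ₜ X) {a b : ℝ} (h : a ≤ b) (x : X) : Cu f a x ⊆ Cu f b x :=
  Cs_mono f.symm h x

lemma isClosed_Ws (f : X ≃ₜ X) (ε : ℝ) (x : X) : IsClosed (Ws f ε x) := by
  have h : Ws f ε x = ⋂ n : ℕ, {y | dist ((⇑f)^[n] x) ((⇑f)^[n] y) ≤ ε} := by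
    ext y; simp [Ws, Set.mem_iInter]
  rw [h]
  exact isClosed_iInter fun n =>
    isClosed_le (continuous_const.dist (f.continuous.iterate n)) continuous_const

lemma isClosed_Cs (f : X ≃ₜ X) (ε : ℝ) (x : X) : IsClosed (Cs f ε x) := by
  rw [Cs, connectedComponentIn]
  split_ifs with h
  · exact ((isClosed_Ws f ε x).isClosedEmbedding_subtypeVal).isClosedMap _
      isClosed_connectedComponent
  · exact isClosed_empty

lemma isCompact_Cs [CompactSpace X] (f : X ≃ₜ X) (ε : ℝ) (x : X) : IsCompact (Cs f ε x) :=
  (isClosed_Cs f ε x).isCompact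

lemma image_Cs_subset {f : X ≃ₜ X} {q : X} (hq : f q = q) {ε : ℝ} (hε : 0 ≤ ε) :
    f '' Cs f ε q ⊆ Cs f ε q := by
  have hW : f '' Ws f ε q ⊆ Ws f ε q := by
    rintro _ ⟨y, hy, rfl⟩ n
    have h := hy (n + 1)
    simp only [Function.iterate_fixed hq] at h ⊢
    rwa [Function.iterate_succ_apply] at h
  refine IsPreconnected.subset_connectedComponentIn
    (isPreconnected_connectedComponentIn.image _ f.continuous.continuousOn)
    ⟨q, mem_Cs_self f hε q, hq⟩ ((Set.image_mono (Cs_subset f ε q)).trans hW)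

lemma iter_image_Cs_subset {f : X ≃ₜ X} {q : X} (hq : f q = q) {ε : ℝ} (hε : 0 ≤ ε) (i : ℕ) :
    (⇑f)^[i] '' Cs f ε q ⊆ Cs f ε q := by
  induction i with
  | zero => simp
  | succ k ih =>
      rw [Function.iterate_succ, Set.image_comp]
      exact Set.Subset.trans (Set.image_mono (image_Cs_subset hq hε)) ih

lemma image_Cu_step {f : X ≃ₜ X} {p : X} (hp : f p = p) {s t : ℝ} (hs : 0 ≤ s) (hst : s ≤ t)
    (hmod : ∀ a b : X, dist a b ≤ s → dist (f a) (f b) ≤ t) :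
    f '' Cu f s p ⊆ Cu f t p := by
  have hW : f '' Wu f s p ⊆ Wu f t p := by
    rintro _ ⟨y, hy, rfl⟩ n
    cases n with
    | zero =>
        have h0 : dist p y ≤ s := by simpa using hy 0
        have := hmod p y h0
        rwa [hp] at this
    | succ k =>
        have h := hy k
        simp only [Function.iterate_fixed (symm_fixed hp)] at h ⊢
        rw [Function.iterate_succ_apply, f.symm_apply_apply]
        exact h.trans hst
  refine IsPreconnected.subset_connectedComponentIn
    (isPreconnected_connectedComponentIn.image _ f.continuous.continuousOn)
    ⟨p, mem_Cs_self f.symm hs p, hp⟩ ((Set.image_mono (Cs_subset f.symm s p)).trans hW)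

lemma Cs_recenter {f : X ≃ₜ X} {x z : X} {a b : ℝ} (hz : z ∈ Cs f a x) (hab : a + a ≤ b) :
    Cs f a x ⊆ Cs f b z := by
  have hzW : z ∈ Ws f a x := Cs_subset f a x hz
  have h1 : Ws f a x ⊆ Ws f b z := by
    intro y hy n
    calc dist ((⇑f)^[n] z) ((⇑f)^[n] y)
        ≤ dist ((⇑f)^[n] z) ((⇑f)^[n] x) + dist ((⇑f)^[n] x) ((⇑f)^[n] y) := dist_triangle _ _ _
      _ ≤ a + a := add_le_add (by rw [dist_comm]; exact hzW n) (hy n)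
      _ ≤ b := hab
  exact IsPreconnected.subset_connectedComponentIn isPreconnected_connectedComponentIn hz
    ((Cs_subset f a x).trans h1)

lemma Cu_recenter {f : X ≃ₜ X} {x z : X} {a b : ℝ} (hz : z ∈ Cu f a x) (hab : a + a ≤ b) :
    Cu f a x ⊆ Cu f b z :=
  Cs_recenter (f := f.symm) hz hab

lemma zIter_symm (f : X ≃ₜ X) (n : ℤ) : zIter f.symm n = zIter f (-n) := by
  funext x
  unfold zIter
  rcases lt_trichotomy n 0 with h | h | h
  · rw [if_neg (not_le.2 h), if_pos (by omega : (0:ℤ) ≤ -n)]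
    rfl
  · subst h; simp
  · rw [if_pos h.le, if_neg (by omega : ¬ (0:ℤ) ≤ -n), neg_neg]

lemma cwExpansiveWith_symm {f : X ≃ₜ X} {c : ℝ} (h : CwExpansiveWith f c) :
    CwExpansiveWith f.symm c :=
  ⟨h.1, fun C hC hb => h.2 C hC fun n => by
    rw [← neg_neg n, ← zIter_symm]; exact hb (-n)⟩

lemma isPreconnected_iInter_nested [CompactSpace X] {S : ℕ → Set X}
    (hcomp : ∀ n, IsCompact (S n)) (hconn : ∀ n, IsPreconnected (S n))
    (hdec : ∀ n, S (n+1) ⊆ S n) : IsPreconnected (⋂ n, S n) := by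
  set K := ⋂ n, S n with hKdef
  rintro U V hU hV hKUV ⟨a, haK, haU⟩ ⟨b, hbK, hbV⟩
  by_contra hne
  rw [Set.not_nonempty_iff_eq_empty] at hne
  have hKclosed : IsClosed K := isClosed_iInter fun n => (hcomp n).isClosed
  have hKcomp : IsCompact K := hKclosed.isCompact
  have hAcomp : IsCompact (K \ V) := hKcomp.diff hV
  have hBcomp : IsCompact (K \ U) := hKcomp.diff hU
  have hdisj : Disjoint (K \ V) (K \ U) := by
    rw [Set.disjoint_left]
    rintro w ⟨hwK, hwV⟩ ⟨_, hwU⟩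
    rcases hKUV hwK with h | h
    · exact hwU h
    · exact hwV h
  obtain ⟨U', V', hU', hV', hAU', hBV', hUV'⟩ :=
    SeparatedNhds.of_isCompact_isCompact hAcomp hBcomp hdisj
  have hKsub : K ⊆ U' ∪ V' := by
    intro w hw
    by_cases hwV : w ∈ V
    · refine Or.inr (hBV' ⟨hw, fun hwU => ?_⟩)
      exact (Set.eq_empty_iff_forall_notMem.1 hne w) ⟨hw, hwU, hwV⟩
    · exact Or.inl (hAU' ⟨hw, hwV⟩)
  have hex : ∃ n, S n ⊆ U' ∪ V' := by
    by_contra hcon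
    push_neg at hcon
    have hne' : ∀ n, (S n \ (U' ∪ V')).Nonempty := by
      intro n
      rcases Set.not_subset.1 (hcon n) with ⟨w, hw1, hw2⟩
      exact ⟨w, hw1, hw2⟩
    obtain ⟨w, hw⟩ := IsCompact.nonempty_iInter_of_sequence_nonempty_isCompact_isClosed
      (fun n => S n \ (U' ∪ V')) (fun n => Set.diff_subset_diff_left (hdec n)) hne'
      ((hcomp 0).diff (hU'.union hV')) (fun n => (hcomp n).isClosed.sdiff (hU'.union hV'))
    rw [Set.mem_iInter] at hw
    have hwK : w ∈ K := Set.mem_iInter.2 fun n => (hw n).1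
    exact (hw 0).2 (hKsub hwK)
  obtain ⟨n, hn⟩ := hex
  have haA : a ∈ K \ V := ⟨haK, fun hav =>
    (Set.eq_empty_iff_forall_notMem.1 hne a) ⟨haK, haU, hav⟩⟩
  have hbB : b ∈ K \ U := ⟨hbK, fun hbu =>
    (Set.eq_empty_iff_forall_notMem.1 hne b) ⟨hbK, hbu, hbV⟩⟩
  obtain ⟨w, hwS, hwU', hwV'⟩ := hconn n U' V' hU' hV' hn
    ⟨a, Set.iInter_subset _ n haK, hAU' haA⟩ ⟨b, Set.iInter_subset _ n hbK, hBV' hbB⟩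
  exact (Set.disjoint_left.1 hUV') hwU' hwV'

lemma exists_eq_of_ncard {S : Set X} {N : ℕ} (hfin : S.Finite) (hcard : S.ncard ≤ N)
    (Y : Fin (N+1) → X) (hY : ∀ i, Y i ∈ S) : ∃ i j : Fin (N+1), i < j ∧ Y i = Y j := by
  by_contra h
  push_neg at h
  have hinj : Function.Injective Y := by
    intro i j hij
    rcases lt_trichotomy i j with hlt | heq | hgt
    · exact absurd hij (h i j hlt)
    · exact heq
    · exact absurd hij.symm (h j i hgt)
  have h1 : (Set.range Y).ncard = N + 1 := by
    rw [← Set.image_univ, Set.ncard_image_of_injective _ hinj, Set.ncard_univ,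
      Nat.card_eq_fintype_card, Fintype.card_fin]
  have h2 : (Set.range Y).ncard ≤ S.ncard :=
    Set.ncard_le_ncard (Set.range_subset_iff.2 hY) hfin
  omega

lemma iterate_periodic {g : X → X} {z : X} {m : ℕ} (hm : g^[m] z = z) :
    ∀ q : ℕ, g^[q * m] z = z := by
  intro q
  induction q with
  | zero => simp
  | succ k ih => rw [Nat.succ_mul, Function.iterate_add_apply, hm, ih]

end CwHelp

namespace CwHelp

lemma oneside [CompactSpace X] (g : X ≃ₜ X) (N : ℕ) {c₀ c : ℝ}
    (hexp : CwExpansiveWith g c₀)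
    (hNg : ∀ x : X, (Cs g c x ∩ Cu g c x).Finite ∧ (Cs g c x ∩ Cu g c x).ncard ≤ N)
    (u : ℕ → ℝ) (hupos : ∀ k, 0 < u k) (hudec : ∀ k, u (k+1) ≤ u k)
    (hustep : ∀ (k : ℕ) (a b : X), dist a b ≤ u (k+1) →
      dist (g a) (g b) ≤ u k ∧ dist (g.symm a) (g.symm b) ≤ u k)
    (hu0c : u 0 + u 0 ≤ c) (hu0exp : u 0 + u 0 ≤ c₀)
    (p x : X) (hp : g p = p) (hx : g x = x)
    (z : X) (hz : z ∈ Cu g (u N) p ∩ Cs g (u N) x) :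
    x ∈ Cu g c p := by
  have hule0 : ∀ k, u k ≤ u 0 := by
    intro k
    induction k with
    | zero => exact le_refl _
    | succ k ih => exact (hudec k).trans ih
  have huN : 0 < u N := hupos N
  -- forward iterates of z stay in unstable continua of p of controlled size
  have C1 : ∀ i, i ≤ N → (⇑g)^[i] z ∈ Cu g (u (N - i)) p := by
    intro i
    induction i with
    | zero => intro _; simpa using hz.1
    | succ k ih =>
        intro hk
        have hk' : k ≤ N := Nat.le_of_succ_le hk
        have h1 := ih hk'
        have heq : N - k = (N - (k+1)) + 1 := by omega
        have hmod : ∀ a b : X, dist a b ≤ u (N - k) → dist (g a) (g b) ≤ u (N - (k+1)) := by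
          intro a b hab
          rw [heq] at hab
          exact (hustep _ a b hab).1
        have hstep := image_Cu_step hp (hupos (N - k)).le
          (by rw [heq]; exact hudec _) hmod
        rw [Function.iterate_succ_apply']
        exact hstep ⟨_, h1, rfl⟩
  -- forward iterates of z stay in the stable continuum of x
  have C2 : ∀ i : ℕ, (⇑g)^[i] z ∈ Cs g (u N) x := fun i =>
    iter_image_Cs_subset hx huN.le i ⟨z, hz.2, rfl⟩
  -- recentering at z
  have hcs : Cs g (u N) x ⊆ Cs g c z :=
    Cs_recenter hz.2 (by have := hule0 N; linarith)
  have hzCu0 : z ∈ Cu g (u 0) p := Cu_mono g (hule0 N) p hz.1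
  have hcu : Cu g (u 0) p ⊆ Cu g c z := Cu_recenter hzCu0 hu0c
  -- the N+1 points
  obtain ⟨i, j, hij, hYeq⟩ := exists_eq_of_ncard (hNg z).1 (hNg z).2
    (fun i : Fin (N+1) => (⇑g)^[i.1] z)
    (by
      intro i
      have hiN : i.1 ≤ N := Nat.lt_succ_iff.1 i.isLt
      exact ⟨hcs (C2 i.1), hcu (Cu_mono g (hule0 (N - i.1)) p (C1 i.1 hiN))⟩)
  -- z is periodic
  set m : ℕ := j.1 - i.1 with hmdef
  have hm1 : 1 ≤ m := by have := hij; omega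
  have hperiod : (⇑g)^[m] z = z := by
    have hj' : j.1 = i.1 + m := by have := hij; omega
    have h2 : (⇑g)^[i.1] ((⇑g)^[m] z) = (⇑g)^[i.1] z := by
      rw [← Function.iterate_add_apply, ← hj']
      exact hYeq.symm
    exact (EquivLike.injective g).iterate i.1 h2
  -- backward iterates of z also lie in the stable continuum of x
  have hback : ∀ i : ℕ, (⇑g.symm)^[i] z ∈ Cs g (u N) x := by
    intro i
    have hzq : (⇑g)^[i * m] z = z := iterate_periodic hperiod i
    have him : i ≤ i * m := le_trans (by simp) (Nat.mul_le_mul_left i hm1)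
    have hkey : (⇑g.symm)^[i] z = (⇑g)^[i * m - i] z := by
      conv_lhs => rw [← hzq]
      rw [(by omega : i * m = i + (i * m - i)), Function.iterate_add_apply,
        symm_iter_iter]
      exact congrArg (fun k => (⇑g)^[k] z) (by omega)
    rw [hkey]
    exact C2 _
  -- the nested intersection
  set C : Set X := Cs g (u N) x with hCdef
  set S : ℕ → Set X := fun n => (⇑g)^[n] '' C with hSdef
  have hSdec : ∀ n, S (n+1) ⊆ S n := by
    intro n
    show (⇑g)^[n+1] '' C ⊆ (⇑g)^[n] '' C
    rw [Function.iterate_succ, Set.image_comp]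
    exact Set.image_mono (image_Cs_subset hx huN.le)
  have hScomp : ∀ n, IsCompact (S n) :=
    fun n => (isCompact_Cs g (u N) x).image (g.continuous.iterate n)
  have hSconn : ∀ n, IsPreconnected (S n) :=
    fun n => isPreconnected_connectedComponentIn.image _ ((g.continuous.iterate n).continuousOn)
  have hxS : ∀ n, x ∈ S n := fun n =>
    ⟨x, mem_Cs_self g huN.le x, Function.iterate_fixed hx n⟩
  have hzS : ∀ n, z ∈ S n := fun n => ⟨(⇑g.symm)^[n] z, hback n, iter_symm_iter g n z⟩
  set K : Set X := ⋂ n, S n with hKdef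
  have hxK : x ∈ K := Set.mem_iInter.2 hxS
  have hzK : z ∈ K := Set.mem_iInter.2 hzS
  have hKconn : IsPreconnected K := isPreconnected_iInter_nested hScomp hSconn hSdec
  have hKcomp : IsCompact K := (isClosed_iInter fun n => (hScomp n).isClosed).isCompact
  have hKsmall : ∀ n : ℤ, zIter g n '' K ⊆ closedBall x (u N) := by
    intro n
    rintro _ ⟨y, hyK, rfl⟩
    have hyC : y ∈ C := by
      have h0 := Set.mem_iInter.1 hyK 0
      simpa [hSdef] using h0
    unfold zIter
    split_ifs with hn
    · have h := Cs_subset g (u N) x hyC n.toNat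
      rw [Function.iterate_fixed hx] at h
      exact Metric.mem_closedBall.2 (by rw [dist_comm]; exact h)
    · obtain ⟨w, hwC, hwy⟩ := Set.mem_iInter.1 hyK (-n).toNat
      have hww : (⇑g.symm)^[(-n).toNat] y = w := by
        rw [← hwy, symm_iter_iter]
      rw [hww]
      have h := Cs_subset g (u N) x hwC 0
      simp only [Function.iterate_zero, id] at h
      exact Metric.mem_closedBall.2 (by rw [dist_comm]; exact h)
  have hdiam : ∀ n : ℤ, Metric.diam (zIter g n '' K) ≤ c₀ := by
    intro n
    refine (Metric.diam_mono (hKsmall n) Metric.isBounded_closedBall).trans ?_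
    refine (Metric.diam_closedBall huN.le).trans ?_
    have := hule0 N
    linarith
  have hsub : K.Subsingleton := hexp.2 K ⟨hKcomp, ⟨x, hxK⟩, hKconn⟩ hdiam
  have hzx : z = x := hsub hzK hxK
  have : u N ≤ c := by have := hule0 N; have := hupos 0; linarith
  exact Cu_mono g this p (hzx ▸ hz.1)

end CwHelp
theorem stmt14 {X : Type*} [MetricSpace X] [CompactSpace X]
    (f : X ≃ₜ X) (N : ℕ)
    (hcw : CwExpansive f) (hlps : CwLPS f) (hNe : CwNExpansive f N)
    (p q : X) (hp : f p = p) (hq : f q = q)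
    (δ γ : ℝ) (hδ : 0 < δ) (hδγ : δ ≤ γ)
    (hstable : ∀ y ∈ Ws f δ q, ∀ i : ℕ, dist ((⇑f.symm)^[i] y) q ≤ γ)
    (z : X) (hz : z ∈ Cu f δ p ∩ Cs f δ q) :
    (∀ i : ℕ, (⇑f.symm)^[i] z ∈ Cu f γ p ∩ Cs f γ q) ∧
    {x : X | f x = x}.Finite := by
  open CwHelp in
  constructor
  · -- Part 1: backward iterates of z
    intro i
    constructor
    · -- unstable part
      have hinv : ∀ i : ℕ, (⇑f.symm)^[i] z ∈ Cu f δ p := by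
        intro i
        induction i with
        | zero => exact hz.1
        | succ k ih =>
            rw [Function.iterate_succ_apply']
            exact image_Cs_subset (f := f.symm) (symm_fixed hp) hδ.le ⟨_, ih, rfl⟩
      exact Cu_mono f hδγ p (hinv i)
    · -- stable part, via hstable
      have himg : (⇑f.symm)^[i] '' Cs f δ q ⊆ Cs f γ q := by
        refine IsPreconnected.subset_connectedComponentIn
          (isPreconnected_connectedComponentIn.image _ ((f.symm.continuous.iterate i).continuousOn))
          ⟨q, mem_Cs_self f hδ.le q, Function.iterate_fixed (symm_fixed hq) i⟩ ?_
        rintro _ ⟨y, hy, rfl⟩ n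
        have hyW : y ∈ Ws f δ q := Cs_subset f δ q hy
        rw [Function.iterate_fixed hq n]
        by_cases hni : i ≤ n
        · have hred : (⇑f)^[n] ((⇑f.symm)^[i] y) = (⇑f)^[n-i] y := by
            rw [(by omega : n = (n - i) + i), Function.iterate_add_apply]
            · rw [iter_symm_iter]
              exact congrArg (fun k => (⇑f)^[k] y) (by omega)
          rw [hred]
          have h := hyW (n - i)
          rw [Function.iterate_fixed hq] at h
          exact h.trans hδγ
        · have hred : (⇑f)^[n] ((⇑f.symm)^[i] y) = (⇑f.symm)^[i-n] y := by
            have h1 : (⇑f.symm)^[i] y = (⇑f.symm)^[n] ((⇑f.symm)^[i-n] y) := by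
              rw [← Function.iterate_add_apply]
              exact congrArg (fun k => (⇑f.symm)^[k] y) (by omega)
            rw [h1, iter_symm_iter]
          rw [hred, dist_comm]
          exact hstable y hyW (i - n)
      exact himg ⟨z, hz.2, rfl⟩
  · -- Part 2: finitely many fixed points
    obtain ⟨c₀, hcw'⟩ := hcw
    have hc₀ : 0 < c₀ := hcw'.1
    obtain ⟨c, hc, hNcard⟩ := hNe
    -- a uniform-continuity step function
    have hstepex : ∀ t : ℝ, 0 < t → ∃ s : ℝ, 0 < s ∧ s ≤ t ∧
        ∀ a b : X, dist a b ≤ s → dist (f a) (f b) ≤ t ∧ dist (f.symm a) (f.symm b) ≤ t := by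
      intro t ht
      obtain ⟨d1, hd1, h1⟩ := Metric.uniformContinuous_iff.1
        (CompactSpace.uniformContinuous_of_continuous f.continuous) t ht
      obtain ⟨d2, hd2, h2⟩ := Metric.uniformContinuous_iff.1
        (CompactSpace.uniformContinuous_of_continuous f.symm.continuous) t ht
      refine ⟨min (min d1 d2 / 2) t, by positivity, min_le_right _ _, fun a b hab => ⟨?_, ?_⟩⟩
      · refine (h1 ?_).le
        have h3 : min (min d1 d2 / 2) t ≤ min d1 d2 / 2 := min_le_left _ _
        have h4 : min d1 d2 ≤ d1 := min_le_left _ _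
        have h5 : 0 < min d1 d2 := lt_min hd1 hd2
        linarith
      · refine (h2 ?_).le
        have h3 : min (min d1 d2 / 2) t ≤ min d1 d2 / 2 := min_le_left _ _
        have h4 : min d1 d2 ≤ d2 := min_le_right _ _
        have h5 : 0 < min d1 d2 := lt_min hd1 hd2
        linarith
    -- the chain of constants
    set T : ℝ := min c c₀ / 4 with hTdef
    have hT : 0 < T := by positivity
    let U : ℕ → {r : ℝ // 0 < r} := fun k =>
      Nat.rec ⟨T, hT⟩ (fun _ prev => ⟨(hstepex prev.1 prev.2).choose,
        (hstepex prev.1 prev.2).choose_spec.1⟩) k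
    set u : ℕ → ℝ := fun k => (U k).1 with hudef
    have hupos : ∀ k, 0 < u k := fun k => (U k).2
    have hu0 : u 0 = T := rfl
    have hudec : ∀ k, u (k+1) ≤ u k := fun k =>
      (hstepex (U k).1 (U k).2).choose_spec.2.1
    have hustep : ∀ (k : ℕ) (a b : X), dist a b ≤ u (k+1) →
        dist (f a) (f b) ≤ u k ∧ dist (f.symm a) (f.symm b) ≤ u k := fun k a b hab =>
      (hstepex (U k).1 (U k).2).choose_spec.2.2 a b hab
    have hu0c : u 0 + u 0 ≤ c := by
      rw [hu0]
      have := min_le_left c c₀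
      linarith
    have hu0exp : u 0 + u 0 ≤ c₀ := by
      rw [hu0]
      have := min_le_right c c₀
      linarith
    -- local product structure at scale u N
    obtain ⟨δ₁, hδ₁, hbr⟩ := hlps (u N) (hupos N)
    -- transported data for f.symm
    have hexp' : CwExpansiveWith f.symm c₀ := cwExpansiveWith_symm hcw'
    have hNg' : ∀ x : X, (Cs f.symm c x ∩ Cu f.symm c x).Finite ∧
        (Cs f.symm c x ∩ Cu f.symm c x).ncard ≤ N := by
      intro x
      have h := hNcard x
      rw [Cs_symm, Cu_symm, Set.inter_comm]
      exact h
    have hustep' : ∀ (k : ℕ) (a b : X), dist a b ≤ u (k+1) →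
        dist (f.symm a) (f.symm b) ≤ u k ∧ dist (f.symm.symm a) (f.symm.symm b) ≤ u k := by
      intro k a b hab
      exact ⟨(hustep k a b hab).2, (hustep k a b hab).1⟩
    -- every fixed point close to a fixed point p' lies in Cs f c p' ∩ Cu f c p'
    have key : ∀ p' x : X, f p' = p' → f x = x → dist p' x < δ₁ →
        x ∈ Cs f c p' ∩ Cu f c p' := by
      intro p' x hp' hx hdist
      constructor
      · -- stable: use oneside for f.symm
        obtain ⟨w, hw1, hw2⟩ := hbr x p' (by rwa [dist_comm] at hdist)
        have h := oneside f.symm N hexp' hNg' u hupos hudec hustep' hu0c hu0exp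
          p' x (symm_fixed hp') (symm_fixed hx) w ⟨hw2, hw1⟩
        rwa [Cu_symm] at h
      · -- unstable: use oneside for f
        obtain ⟨w, hw1, hw2⟩ := hbr p' x hdist
        exact oneside f N hcw' hNcard u hupos hudec hustep hu0c hu0exp
          p' x hp' hx w ⟨hw1, hw2⟩
    -- conclude finiteness by contradiction
    by_contra hFin
    have hFinf : Set.Infinite {x : X | f x = x} := hFin
    have hFclosed : IsClosed {x : X | f x = x} := isClosed_eq f.continuous continuous_id
    let e := hFinf.natEmbedding
    set seq : ℕ → X := fun n => (e n : X) with hseqdef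
    have hseqF : ∀ n, seq n ∈ {x : X | f x = x} := fun n => (e n).2
    have hseqinj : Function.Injective seq := fun a b h =>
      e.injective (Subtype.coe_injective h)
    obtain ⟨p', hp'F, φ, hφ, hconv⟩ := IsCompact.tendsto_subseq hFclosed.isCompact hseqF
    have hp' : f p' = p' := hp'F
    have hSfin : (Cs f c p' ∩ Cu f c p').Finite := (hNcard p').1
    have hTfin : ((Cs f c p' ∩ Cu f c p') \ {p'}).Finite := hSfin.subset Set.diff_subset
    have hp'notT : p' ∉ (Cs f c p' ∩ Cu f c p') \ {p'} := fun h => h.2 rfl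
    obtain ⟨r, hr, hball⟩ := Metric.isOpen_iff.1 hTfin.isClosed.isOpen_compl p' hp'notT
    have hrδ : 0 < min r δ₁ := lt_min hr hδ₁
    have hev : ∀ᶠ n in Filter.atTop, dist ((seq ∘ φ) n) p' < min r δ₁ :=
      Metric.tendsto_nhds.1 hconv _ hrδ
    obtain ⟨K, hK⟩ := Filter.eventually_atTop.1 hev
    have hvalne : seq (φ K) ≠ seq (φ (K+1)) := by
      intro h
      have h2 := hseqinj h
      have h3 := hφ.injective h2
      omega
    obtain ⟨x, hxF, hxne, hxd⟩ : ∃ x : X, f x = x ∧ x ≠ p' ∧ dist x p' < min r δ₁ := by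
      by_cases hcase : seq (φ K) = p'
      · refine ⟨seq (φ (K+1)), hseqF _, ?_, hK (K+1) (by omega)⟩
        intro h
        exact hvalne (hcase.trans h.symm)
      · exact ⟨seq (φ K), hseqF _, hcase, hK K le_rfl⟩
    have hxS : x ∈ Cs f c p' ∩ Cu f c p' :=
      key p' x hp' hxF (by rw [dist_comm]; exact hxd.trans_le (min_le_right _ _))
    have hxT : x ∈ (Cs f c p' ∩ Cu f c p') \ {p'} := ⟨hxS, hxne⟩
    have hxball : x ∈ Metric.ball p' r := hxd.trans_le (min_le_left _ _)
    exact hball hxball hxT
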